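/- Let (A_n)_{n∈ℕ} be a family of abelian groups together with group homomorphisms h : A_n → A_{n+1} for each n (write h^k : A_n → A_{n+k} for the k-fold composite, h^0 = id). Call a family (s_n)_{n∈ℕ} with s_n ∈ A_n a derivation if s_{m+n} = h^n(s_m) + h^m(s_n) for all m, n ∈ ℕ. Then: (1) every derivation satisfies s_0 = 0 and s_n = n · h^{n-1}(s_1) for all n ≥ 1; (2) the map s ↦ s_1 is a bijection from the set of derivations onto A_1, with inverse sending a ∈ A_1 to the family s_0 = 0, s_n = n · h^{n-1}(a) for n ≥ 1. Consequently, the object Ω of the category of such families defined by Ω_0 = 0, Ω_n = ℤ for n ≥ 1 with identity transition maps represents the derivation functor: the families of group homomorphisms (f_n : Ω_n → A_n) with f_{n+1} ∘ h^{(Ω)} = h ∘ f_n are also in natural bijection with A_1, so Ω is the module of differentials Ω_ℕ of the monoid (ℕ,+). -/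

import Mathlib

/-- A Beck module over the additive monoid `ℕ`: a family of abelian groups `A n` with
transition homomorphisms `h : A n →+ A (n+1)`.  `hpow h k n : A n →+ A (n+k)` is the
`k`-fold composite `h^k` (with `h^0 = id`). -/
def hpow {A : ℕ → Type*} [∀ n, AddCommGroup (A n)] (h : ∀ n, A n →+ A (n + 1)) :
    ∀ (k n : ℕ), A n →+ A (n + k)
  | 0, n => AddMonoidHom.id (A n)
  | k + 1, n => (h (n + k)).comp (hpow h k n)

/-- A family `(s_n)` with `s_n ∈ A n` is a derivation if
`s (m+n) = h^n (s m) + h^m (s n)` for all `m n` (the second summand being transported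
along `n + m = m + n`). -/
def IsDerivation {A : ℕ → Type*} [∀ n, AddCommGroup (A n)] (h : ∀ n, A n →+ A (n + 1))
    (s : ∀ n, A n) : Prop :=
  ∀ m n : ℕ, s (m + n) =
    hpow h n m (s m) + cast (congrArg A (Nat.add_comm n m)) (hpow h m n (s n))

/-- The module of differentials `Ω_ℕ` of the monoid `(ℕ,+)`: `Ω_0 = 0`, `Ω_n = ℤ` for
`n ≥ 1`. -/
def OmegaNat : ℕ → Type
  | 0 => PUnit
  | _ + 1 => ℤ

instance OmegaNat.addCommGroup : ∀ n, AddCommGroup (OmegaNat n)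
  | 0 => inferInstanceAs (AddCommGroup PUnit)
  | _ + 1 => inferInstanceAs (AddCommGroup ℤ)

/-- The transition maps of `Ω_ℕ`: zero out of `Ω_0`, the identity `ℤ → ℤ` for `n ≥ 1`. -/
def hOmegaNat : ∀ n, OmegaNat n →+ OmegaNat (n + 1)
  | 0 => 0
  | _ + 1 => AddMonoidHom.id ℤ

section Aux
set_option linter.unusedSectionVars false
variable {A : ℕ → Type*} [∀ n, AddCommGroup (A n)] (h : ∀ n, A n →+ A (n + 1))

lemma castA_zero {m m'} (e : m = m') : cast (congrArg A e) (0 : A m) = 0 := by subst e; rfl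

lemma castA_nsmul {m m'} (e : m = m') (k : ℕ) (x : A m) :
    cast (congrArg A e) (k • x) = k • cast (congrArg A e) x := by subst e; rfl

lemma castA_h {m m'} (e : m = m') (e2 : m + 1 = m' + 1) (x : A m) :
    h m' (cast (congrArg A e) x) = cast (congrArg A e2) (h m x) := by subst e; rfl

lemma castA_cast {m m' m''} (e : m = m') (e' : m' = m'') (x : A m) :
    cast (congrArg A e') (cast (congrArg A e) x) = cast (congrArg A (e.trans e')) x := by
  subst e; subst e'; rfl

lemma hpow_one (n : ℕ) (x : A n) : hpow h 1 n x = h n x := rfl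

lemma hpow_add (j k n : ℕ) (x : A n) :
    hpow h (j+k) n x = cast (congrArg A (Nat.add_assoc n j k)) (hpow h k (n+j) (hpow h j n x)) := by
  induction k with
  | zero => rfl
  | succ k ih =>
      show h (n + (j+k)) (hpow h (j+k) n x) = _
      rw [ih, castA_h h (Nat.add_assoc n j k) (by omega)]
      rfl

lemma key (x : A 1) (k m : ℕ) (e : 1 + k = m) (n : ℕ) (e2 : 1 + (k + n) = m + n) :
    hpow h n m (cast (congrArg A e) (hpow h k 1 x)) = cast (congrArg A e2) (hpow h (k+n) 1 x) := by
  subst e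
  rw [hpow_add, castA_cast (Nat.add_assoc 1 k n) e2]
  rfl

lemma normf (x : A 1) (k k' m : ℕ) (e : k = k') (e1 : 1 + k = m) (e2 : 1 + k' = m) :
    cast (congrArg A e1) (hpow h k 1 x) = cast (congrArg A e2) (hpow h k' 1 x) := by
  subst e; rfl

lemma der_zero (s : ∀ n, A n) (hs : IsDerivation h s) : s 0 = 0 := by
  have h00 : s 0 = s 0 + s 0 := hs 0 0
  exact left_eq_add.mp h00

lemma der_succ (s : ∀ n, A n) (hs : IsDerivation h s) (n : ℕ) :
    s (n + 1) = (n + 1) • cast (congrArg A (Nat.add_comm 1 n)) (hpow h n 1 (s 1)) := by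
  induction n with
  | zero => exact (one_smul ℕ (s 1)).symm
  | succ n ih =>
      have hstep := hs (n+1) 1
      rw [hstep, hpow_one, ih, map_nsmul, castA_h h (Nat.add_comm 1 n) (by omega)]
      rw [show h (1+n) (hpow h n 1 (s 1)) = hpow h (n+1) 1 (s 1) from rfl]
      exact (succ_nsmul (cast (congrArg A (Nat.add_comm 1 (n+1))) (hpow h (n+1) 1 (s 1))) (n+1)).symm

def stdDer (a : A 1) : ∀ n, A n
  | 0 => 0
  | k+1 => (k+1) • cast (congrArg A (Nat.add_comm 1 k)) (hpow h k 1 a)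

lemma stdDer_cast (a : A 1) {m m'} (e : m = m') :
    stdDer h a m' = cast (congrArg A e) (stdDer h a m) := by subst e; rfl

lemma stdDer_one (a : A 1) : stdDer h a 1 = a := one_smul ℕ a

lemma stdDer_isDerivation (a : A 1) : IsDerivation h (stdDer h a) := by
  intro m n
  match m, n with
  | 0, 0 =>
      show (0 : A 0) = 0 + cast (congrArg A (Nat.add_comm 0 0)) (0 : A 0)
      simp
  | 0, q+1 =>
      show stdDer h a (0+(q+1)) =
        hpow h (q+1) 0 0 + cast (congrArg A (Nat.add_comm (q+1) 0))
          (hpow h 0 (q+1) (stdDer h a (q+1)))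
      rw [map_zero]
      refine (stdDer_cast h a (show q+1 = 0+(q+1) by omega)).trans ?_
      exact (zero_add _).symm
  | p+1, 0 =>
      show stdDer h a ((p+1)+0) =
        hpow h 0 (p+1) (stdDer h a (p+1)) + cast (congrArg A (Nat.add_comm 0 (p+1)))
          (hpow h (p+1) 0 0)
      have c1 : cast (congrArg A (Nat.add_comm 0 (p+1))) (hpow h (p+1) 0 (0 : A 0)) = 0 := by
        rw [map_zero]
        exact castA_zero (Nat.add_comm 0 (p+1))
      rw [c1]
      exact (add_zero _).symm
  | p+1, q+1 =>
      show ((p+1+q)+1) • cast (congrArg A (Nat.add_comm 1 (p+1+q))) (hpow h (p+1+q) 1 a) =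
        hpow h (q+1) (p+1) ((p+1) • cast (congrArg A (Nat.add_comm 1 p)) (hpow h p 1 a)) +
        cast (congrArg A (Nat.add_comm (q+1) (p+1)))
          (hpow h (p+1) (q+1) ((q+1) • cast (congrArg A (Nat.add_comm 1 q)) (hpow h q 1 a)))
      rw [map_nsmul, map_nsmul,
        key h a p (p+1) (Nat.add_comm 1 p) (q+1) (by omega),
        key h a q (q+1) (Nat.add_comm 1 q) (p+1) (by omega),
        castA_nsmul, castA_cast (show 1+(q+(p+1)) = (q+1)+(p+1) by omega) (Nat.add_comm (q+1) (p+1)),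
        normf h a (p+(q+1)) (p+1+q) ((p+1)+(q+1)) (by omega) (by omega) (by omega),
        normf h a (q+(p+1)) (p+1+q) ((p+1)+(q+1)) (by omega) (by omega) (by omega),
        normf h a (p+1+q) (p+1+q) ((p+1)+(q+1)) rfl (by omega) (by omega),
        ← add_nsmul]
      congr 1
      omega

def stdHom (a : A 1) : ∀ n, OmegaNat n →+ A n
  | 0 => 0
  | k+1 => zmultiplesHom (A (k+1)) (cast (congrArg A (Nat.add_comm 1 k)) (hpow h k 1 a))

lemma stdHom_one (a : A 1) : stdHom h a 1 (1 : ℤ) = a := one_zsmul a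

lemma stdHom_compat (a : A 1) : ∀ (n : ℕ) (t : OmegaNat n),
    stdHom h a (n+1) (hOmegaNat n t) = h n (stdHom h a n t)
  | 0, t => by
      show stdHom h a 1 (0 : ℤ) = h 0 (0 : A 0)
      rw [map_zero]; exact map_zero (stdHom h a 1)
  | k+1, t => by
      revert t
      show ∀ t : ℤ, (t • cast (congrArg A (Nat.add_comm 1 (k+1))) (hpow h (k+1) 1 a) : A (k+2)) =
        h (k+1) (t • cast (congrArg A (Nat.add_comm 1 k)) (hpow h k 1 a))
      intro t
      rw [map_zsmul, castA_h h (Nat.add_comm 1 k) (by omega)]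
      rfl

end Aux

/-- **Proposition.** For a Beck module `(A, h)` over `(ℕ,+)`:
(1) every derivation `s` satisfies `s 0 = 0` and `s (n+1) = (n+1) • h^n (s 1)`;
(2) `s ↦ s 1` is a bijection from the set of derivations onto `A 1`;
(3) `Ω_ℕ` represents the derivation functor: the families of homomorphisms
`f_n : Ω_n →+ A n` commuting with the transition maps are also in bijection with `A 1`
via `f ↦ f 1 (1)`; so `Ω_ℕ` is the module of differentials of `(ℕ,+)`. -/
theorem omegaNat_represents_derivations
    (A : ℕ → Type*) [∀ n, AddCommGroup (A n)] (h : ∀ n, A n →+ A (n + 1)) :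
    (∀ s : ∀ n, A n, IsDerivation h s →
      s 0 = 0 ∧ ∀ n : ℕ, s (n + 1) =
        (n + 1) • cast (congrArg A (Nat.add_comm 1 n)) (hpow h n 1 (s 1))) ∧
    Function.Bijective
      (fun s : {s : ∀ n, A n // IsDerivation h s} => s.1 1) ∧
    Function.Bijective
      (fun F : {g : ∀ n, OmegaNat n →+ A n //
          ∀ (n : ℕ) (t : OmegaNat n), g (n + 1) (hOmegaNat n t) = h n (g n t)} =>
        (F.1 1) (1 : ℤ)) := by
  refine ⟨fun s hs => ⟨der_zero h s hs, der_succ h s hs⟩, ⟨?_, ?_⟩, ?_, ?_⟩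
  · rintro ⟨s, hs⟩ ⟨t, ht⟩ hst
    simp only at hst
    apply Subtype.ext
    funext n
    match n with
    | 0 => show s 0 = t 0; rw [der_zero h s hs, der_zero h t ht]
    | n+1 => show s (n+1) = t (n+1); rw [der_succ h s hs n, der_succ h t ht n, hst]
  · intro a
    exact ⟨⟨stdDer h a, stdDer_isDerivation h a⟩, stdDer_one h a⟩
  · rintro ⟨F, hF⟩ ⟨G, hG⟩ e
    simp only at e
    apply Subtype.ext
    funext n
    simp only
    induction n with
    | zero =>
        apply AddMonoidHom.ext
        intro t
        have ht : t = 0 := Subsingleton.elim (α := PUnit) t 0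
        rw [ht, map_zero, map_zero]
    | succ k ih =>
        match k, ih with
        | 0, _ => exact AddMonoidHom.ext_int e
        | j+1, ih =>
            apply AddMonoidHom.ext_int
            calc F (j+2) (1 : ℤ) = h (j+1) (F (j+1) (1 : ℤ)) := hF (j+1) (1 : ℤ)
              _ = h (j+1) (G (j+1) (1 : ℤ)) := by rw [ih]
              _ = G (j+2) (1 : ℤ) := (hG (j+1) (1 : ℤ)).symm
  · intro a
    exact ⟨⟨stdHom h a, stdHom_compat h a⟩, stdHom_one h a⟩
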